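/- Let (Ω, ℙ) be a probability space, n ≥ 1, and Z : Ω → (Fin n → ℂ) a random vector whose components Zᵢ are square-integrable with E[Zᵢ] = 0 for all i. Let K be the covariance matrix, K i j := E[Zᵢ · conj(Zⱼ)], and C the pseudo-covariance matrix, C i j := E[Zᵢ · Zⱼ]. Then: (i) K is Hermitian and positive semidefinite (xᴴ K x is real and ≥ 0 for all x ∈ ℂⁿ); (ii) C is symmetric (C i j = C j i); (iii) for every u ∈ ℂⁿ, if K·u = 0 then (conj C)·u = 0, where conj C denotes the entrywise complex conjugate of C. -/

import Mathlib

open MeasureTheory Matrix ComplexConjugate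
open scoped ENNReal

lemma my_conj_memL2 {Ω : Type*} [MeasurableSpace Ω] {μ : Measure Ω} {f : Ω → ℂ}
    (hf : MemLp f 2 μ) : MemLp (fun ω => conj (f ω)) 2 μ :=
  ⟨Complex.continuous_conj.comp_aestronglyMeasurable hf.1, by
    simpa using (eLpNorm_conj f 2 μ) ▸ hf.2⟩

lemma my_int_mul {Ω : Type*} [MeasurableSpace Ω] {μ : Measure Ω} {f g : Ω → ℂ}
    (hf : MemLp f 2 μ) (hg : MemLp g 2 μ) : Integrable (fun ω => f ω * g ω) μ := by
  rw [← memLp_one_iff_integrable]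
  have h : (1 : ℝ≥0∞) / 1 = 1 / 2 + 1 / 2 := by rw [ENNReal.add_halves, one_div_one]
  haveI : ENNReal.HolderTriple 2 2 1 := ⟨by simpa [one_div] using h.symm⟩
  exact hg.smul hf

/-- **Necessary conditions on the covariance/pseudo-covariance pair of a zero-mean
complex random vector.**  (i) the covariance matrix `K` is Hermitian and positive
semidefinite (`xᴴ K x` is real and `≥ 0`); (ii) the pseudo-covariance matrix `C` is
symmetric; (iii) `K u = 0` implies `(conj C) u = 0`. -/
theorem stmt6 {Ω : Type*} [MeasurableSpace Ω] (ℙ : Measure Ω) [IsProbabilityMeasure ℙ]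
    (n : ℕ) (hn : 1 ≤ n) (Z : Ω → Fin n → ℂ)
    (hL2 : ∀ i, MemLp (fun ω => Z ω i) 2 ℙ)
    (hmean : ∀ i, ∫ ω, Z ω i ∂ℙ = 0)
    (K C : Matrix (Fin n) (Fin n) ℂ)
    (hK : ∀ i j, K i j = ∫ ω, Z ω i * conj (Z ω j) ∂ℙ)
    (hC : ∀ i j, C i j = ∫ ω, Z ω i * Z ω j ∂ℙ) :
    (K.IsHermitian ∧
      ∀ x : Fin n → ℂ,
        0 ≤ (star x ⬝ᵥ K.mulVec x).re ∧ (star x ⬝ᵥ K.mulVec x).im = 0) ∧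
    (∀ i j, C i j = C j i) ∧
    (∀ u : Fin n → ℂ, K.mulVec u = 0 → (C.map (starRingEnd ℂ)).mulVec u = 0) := by
  have hZconj : ∀ j, MemLp (fun ω => conj (Z ω j)) 2 ℙ := fun j => my_conj_memL2 (hL2 j)
  set S : (Fin n → ℂ) → Ω → ℂ := fun x ω => ∑ i, conj (x i) * Z ω i with hSdef
  have hSmem : ∀ x : Fin n → ℂ, MemLp (S x) 2 ℙ := by
    intro x
    exact memLp_finset_sum _ fun i _ => (hL2 i).const_mul (conj (x i))
  have h1 : ∀ (x : Fin n → ℂ) (i j : Fin n),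
      Integrable (fun ω => (conj (x i) * Z ω i) * (x j * conj (Z ω j))) ℙ := by
    intro x i j
    exact my_int_mul ((hL2 i).const_mul (conj (x i))) ((hZconj j).const_mul (x j))
  have hquad : ∀ x : Fin n → ℂ,
      star x ⬝ᵥ K.mulVec x = ∫ ω, S x ω * conj (S x ω) ∂ℙ := by
    intro x
    calc star x ⬝ᵥ K.mulVec x
        = ∑ i, ∑ j, ∫ ω, (conj (x i) * Z ω i) * (x j * conj (Z ω j)) ∂ℙ := by
          simp only [dotProduct, mulVec, dotProduct, Pi.star_apply, Finset.mul_sum,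
            RCLike.star_def]
          refine Finset.sum_congr rfl fun i _ => Finset.sum_congr rfl fun j _ => ?_
          rw [show (fun ω => (conj (x i) * Z ω i) * (x j * conj (Z ω j)))
              = fun ω => (conj (x i) * x j) * (Z ω i * conj (Z ω j)) from
              funext fun ω => by ring, integral_const_mul, ← hK]
          ring
      _ = ∫ ω, ∑ i, ∑ j, (conj (x i) * Z ω i) * (x j * conj (Z ω j)) ∂ℙ := by
          rw [integral_finset_sum _ fun i _ =>
            integrable_finset_sum _ fun j _ => h1 x i j]
          exact Finset.sum_congr rfl fun i _ =>
            (integral_finset_sum _ fun j _ => h1 x i j).symm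
      _ = ∫ ω, S x ω * conj (S x ω) ∂ℙ := by
          congr 1; funext ω
          rw [hSdef]
          simp only [map_sum, _root_.map_mul, Complex.conj_conj, Finset.sum_mul,
            Finset.mul_sum]
          rw [Finset.sum_comm]
  have hquad' : ∀ x : Fin n → ℂ,
      star x ⬝ᵥ K.mulVec x = ((∫ ω, ‖S x ω‖^2 ∂ℙ : ℝ) : ℂ) := by
    intro x
    rw [hquad x, show (fun ω => S x ω * conj (S x ω))
        = fun ω => ((‖S x ω‖^2 : ℝ) : ℂ) from funext fun ω => by
          rw [Complex.mul_conj']; norm_cast]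
    exact integral_ofReal
  refine ⟨⟨?_, ?_⟩, ?_, ?_⟩
  · ext i j
    simp only [conjTranspose_apply, hK, RCLike.star_def, ← integral_conj]
    congr 1; funext ω
    simp [mul_comm]
  · intro x
    rw [hquad' x]
    constructor
    · simpa using integral_nonneg fun ω => sq_nonneg ‖S x ω‖
    · simp
  · intro i j
    rw [hC, hC]
    congr 1; funext ω; ring
  · intro u hu
    have h0 : star u ⬝ᵥ K.mulVec u = 0 := by rw [hu]; simp
    have hint0 : ∫ ω, ‖S u ω‖^2 ∂ℙ = 0 := by
      have := hquad' u
      rw [h0] at this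
      exact_mod_cast this.symm
    have hSint2 : Integrable (fun ω => ‖S u ω‖^2) ℙ :=
      (memLp_two_iff_integrable_sq_norm (hSmem u).1).mp (hSmem u)
    have hae : S u =ᵐ[ℙ] 0 := by
      have h2 := (integral_eq_zero_iff_of_nonneg (fun ω => sq_nonneg ‖S u ω‖) hSint2).mp hint0
      filter_upwards [h2] with ω hω
      have : ‖S u ω‖^2 = 0 := hω
      simpa using this
    funext i
    show ∑ j, (C.map (starRingEnd ℂ)) i j * u j = 0
    have hterm : ∀ j, (C.map (starRingEnd ℂ)) i j * u j
        = ∫ ω, conj (Z ω i) * (u j * conj (Z ω j)) ∂ℙ := by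
      intro j
      rw [show (fun ω => conj (Z ω i) * (u j * conj (Z ω j)))
          = fun ω => u j * conj (Z ω i * Z ω j) from funext fun ω => by
            simp [_root_.map_mul]; ring, integral_const_mul]
      rw [Matrix.map_apply, hC, ← integral_conj]
      ring
    rw [Finset.sum_congr rfl fun j _ => hterm j,
      ← integral_finset_sum _ fun j _ => my_int_mul (hZconj i) ((hZconj j).const_mul (u j))]
    have : (fun ω => ∑ j, conj (Z ω i) * (u j * conj (Z ω j))) =ᵐ[ℙ] 0 := by
      filter_upwards [hae] with ω hω
      have hc : conj (S u ω) = ∑ j, u j * conj (Z ω j) := by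
        rw [hSdef]; simp [map_sum]
      have : (∑ j, u j * conj (Z ω j)) = 0 := by
        rw [← hc, hω]; simp
      simp [← Finset.mul_sum, this]
    rw [integral_congr_ae this]
    simp
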